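/- Let m ≥ 1 and let B be an m×m matrix over F₂. Then the digital net generated by (I, B) is a (0,m,2)-net over F₂ if and only if there exist nonsingular lower-triangular m×m matrices L_1, L_2 over F₂ such that B = L_1·J_m·L_2. -/

import Mathlib

open Matrix

/-- The vector of binary digits of `l` (least significant first). -/
def digitsVec (m l : ℕ) : Fin m → ZMod 2 := fun k => if l.testBit k.val then 1 else 0

/-- The map φ sending a bit vector to a real number in [0,1). -/
noncomputable def phiMap (m : ℕ) (y : Fin m → ZMod 2) : ℝ :=
  ∑ k : Fin m, ((y k).val : ℝ) / 2 ^ (k.val + 1)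

/-- The digital net (as a multiset of `2^m` points in `[0,1)^s`) generated by
matrices `C 0, …, C (s-1)`. -/
noncomputable def digitalNet (m s : ℕ) (C : Fin s → Matrix (Fin m) (Fin m) (ZMod 2)) :
    Multiset (Fin s → ℝ) :=
  (Multiset.range (2 ^ m)).map fun l => fun j => phiMap m ((C j).mulVec (digitsVec m l))

open Classical in
/-- `P` is a `(t,m,s)`-net over `F₂`: every elementary interval of volume `2^{t-m}`
contains exactly `2^t` points of `P`, counted with multiplicity. -/
def IsNet (t m s : ℕ) (P : Multiset (Fin s → ℝ)) : Prop :=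
  ∀ d : Fin s → ℕ, (∑ i, d i) = m - t →
    ∀ a : Fin s → ℕ, (∀ i, a i < 2 ^ d i) →
      (P.countP fun x => ∀ i,
        ((a i : ℝ) / 2 ^ d i ≤ x i ∧ x i < ((a i : ℝ) + 1) / 2 ^ d i)) = 2 ^ t

/-- The anti-diagonal matrix `J_m` over `F₂`. -/
def Jmat (m : ℕ) : Matrix (Fin m) (Fin m) (ZMod 2) :=
  Matrix.of fun i j => if i.val + j.val = m - 1 then 1 else 0

/-- The upper-triangular Pascal matrix `P_m` over `F₂` (0-indexed entry `(i,j)` is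
`binom(j,i) mod 2`). -/
def Pmat (m : ℕ) : Matrix (Fin m) (Fin m) (ZMod 2) :=
  Matrix.of fun i j => ((j.val.choose i.val : ℕ) : ZMod 2)

/-- A matrix is lower triangular. -/
def IsLowerTri {m : ℕ} (L : Matrix (Fin m) (Fin m) (ZMod 2)) : Prop :=
  ∀ i j : Fin m, i < j → L i j = 0

section Work
open Finset

/-- little-endian value of a bit vector -/
def lval {d : ℕ} (b : Fin d → ZMod 2) : ℕ := ∑ k : Fin d, (b k).val * 2 ^ (k : ℕ)

lemma zmod2_cases (x : ZMod 2) : x = 0 ∨ x = 1 := by revert x; decide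

lemma zmod2_val_le_one (x : ZMod 2) : x.val ≤ 1 := Nat.lt_succ_iff.mp (ZMod.val_lt x)

lemma lval_cons {d : ℕ} (x : ZMod 2) (b : Fin d → ZMod 2) :
    lval (Fin.cons x b) = x.val + 2 * lval b := by
  rw [lval, Fin.sum_univ_succ, Fin.cons_zero]
  simp only [Fin.val_zero, pow_zero, mul_one]
  congr 1
  rw [lval, Finset.mul_sum]
  refine Finset.sum_congr rfl fun k _ => ?_
  rw [Fin.cons_succ, Fin.val_succ, pow_succ]
  ring

lemma lval_lt {d : ℕ} (b : Fin d → ZMod 2) : lval b < 2 ^ d := by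
  induction d with
  | zero => simp [lval]
  | succ d ih =>
    rw [← Fin.cons_self_tail b, lval_cons]
    have h1 := zmod2_val_le_one (b 0)
    have h2 := ih (Fin.tail b)
    rw [pow_succ]
    omega

lemma lval_injective {d : ℕ} : Function.Injective (lval (d := d)) := by
  induction d with
  | zero => intro a b _; funext k; exact absurd k.isLt (Nat.not_lt_zero _)
  | succ d ih =>
    intro a b h
    rw [← Fin.cons_self_tail a, ← Fin.cons_self_tail b] at h ⊢
    rw [lval_cons, lval_cons] at h
    have h1 := zmod2_val_le_one (a 0)
    have h2 := zmod2_val_le_one (b 0)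
    have hv : (a 0).val = (b 0).val ∧ lval (Fin.tail a) = lval (Fin.tail b) := by omega
    have h0 : a 0 = b 0 := ZMod.val_injective 2 hv.1
    rw [h0, ih hv.2]

lemma digitsVec_lval {d : ℕ} (b : Fin d → ZMod 2) : digitsVec d (lval b) = b := by
  induction d with
  | zero => funext k; exact absurd k.isLt (Nat.not_lt_zero _)
  | succ d ih =>
    rw [← Fin.cons_self_tail b, lval_cons]
    funext k
    refine Fin.cases ?_ (fun k => ?_) k
    · rcases zmod2_cases (b 0) with h | h <;>
      · simp only [digitsVec, Fin.val_zero, Fin.cons_zero, h]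
        norm_num [Nat.testBit_zero, show ((0:ZMod 2)).val = 0 from rfl,
          show ((1:ZMod 2)).val = 1 from rfl, Nat.add_mul_mod_self_left]
    · simp only [digitsVec, Fin.val_succ, Fin.cons_succ]
      have h1 := zmod2_val_le_one (b 0)
      have hdiv : ((b 0).val + 2 * lval (Fin.tail b)) / 2 = lval (Fin.tail b) := by omega
      simp only [Nat.testBit_add_one, hdiv]
      exact congrFun (ih (Fin.tail b)) k

lemma lval_surjective {d : ℕ} (l : ℕ) (hl : l < 2 ^ d) : ∃ b : Fin d → ZMod 2, lval b = l := by
  have hinj : Function.Injective (fun b : Fin d → ZMod 2 => (⟨lval b, lval_lt b⟩ : Fin (2 ^ d))) :=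
    fun a b h => lval_injective (congrArg Fin.val h)
  have hcard : Fintype.card (Fin d → ZMod 2) = Fintype.card (Fin (2 ^ d)) := by simp
  have hbij := (Fintype.bijective_iff_injective_and_card _).mpr ⟨hinj, hcard⟩
  obtain ⟨b, hb⟩ := hbij.2 ⟨l, hl⟩
  exact ⟨b, congrArg Fin.val hb⟩

lemma range_eq_map_lval (d : ℕ) :
    (Multiset.range (2 ^ d)) = (Finset.univ.val : Multiset (Fin d → ZMod 2)).map lval := by
  refine (Multiset.Nodup.ext (Multiset.nodup_range _) (Multiset.Nodup.map lval_injective Finset.univ.nodup)).mpr ?_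
  intro l
  simp only [Multiset.mem_range, Multiset.mem_map]
  constructor
  · intro hl; obtain ⟨b, hb⟩ := lval_surjective l hl; exact ⟨b, by simp, hb⟩
  · rintro ⟨b, -, rfl⟩; exact lval_lt b

lemma geom_tail (d M : ℕ) (h : d ≤ M) :
    ∑ k ∈ Finset.Ico d M, ((2:ℝ) ^ (k+1))⁻¹ = (2^d)⁻¹ - (2^M)⁻¹ := by
  induction M with
  | zero => have : d = 0 := by omega
            simp [this]
  | succ M ih =>
    rcases Nat.lt_or_ge d (M+1) with h2 | h2
    · have hdM : d ≤ M := by omega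
      rw [Finset.sum_Ico_succ_top hdM, ih hdM]
      have h1 : (2:ℝ)^(M+1) = 2^M * 2 := by ring
      field_simp
      ring
    · have : d = M + 1 := by omega
      simp [this]

def hival (m d : ℕ) (hd : d ≤ m) (y : Fin m → ZMod 2) : ℕ :=
  lval (fun k : Fin d => y (Fin.castLE hd k.rev))

lemma hival_bounds {m d : ℕ} (hd : d ≤ m) (y : Fin m → ZMod 2) :
    (hival m d hd y : ℝ) / 2^d ≤ phiMap m y ∧
      phiMap m y < ((hival m d hd y : ℝ) + 1) / 2^d := by
  classical
  set g : ℕ → ℝ := fun k => if h : k < m then ((y ⟨k,h⟩).val : ℝ)/2^(k+1) else 0 with hg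
  have h1 : phiMap m y = ∑ k ∈ Finset.range m, g k := by
    rw [← Fin.sum_univ_eq_sum_range g m, phiMap]
    refine Finset.sum_congr rfl fun i _ => ?_
    rw [hg]; simp only [i.isLt, dif_pos, Fin.eta]
  have h2 : (hival m d hd y : ℝ) / 2^d = ∑ k ∈ Finset.range d, g k := by
    have hc : (hival m d hd y : ℝ)
        = ∑ k : Fin d, ((y (Fin.castLE hd k.rev)).val : ℝ) * 2 ^ (k : ℕ) := by
      rw [hival, lval]; push_cast; rfl
    have hrev : (hival m d hd y : ℝ)
        = ∑ k : Fin d, ((y (Fin.castLE hd k)).val : ℝ) * 2 ^ (d - 1 - (k : ℕ)) := by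
      rw [hc, ← Equiv.sum_comp (Fin.revPerm) (fun k : Fin d => ((y (Fin.castLE hd k.rev)).val : ℝ) * 2 ^ (k : ℕ))]
      refine Finset.sum_congr rfl fun k _ => ?_
      rw [Fin.revPerm_apply, Fin.rev_rev]
      have : ((k.rev : Fin d) : ℕ) = d - 1 - (k : ℕ) := by rw [Fin.val_rev]; omega
      rw [this]
    rw [← Fin.sum_univ_eq_sum_range g d]
    rw [hrev, Finset.sum_div]
    refine Finset.sum_congr rfl fun k _ => ?_
    have hkm : (k : ℕ) < m := lt_of_lt_of_le k.isLt hd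
    rw [hg]; simp only [hkm, dif_pos]
    have hpow : (2:ℝ) ^ (d - 1 - (k:ℕ)) * 2 ^ ((k:ℕ)+1) = 2 ^ d := by
      rw [← pow_add]; congr 1; omega
    have hcast : y (Fin.castLE hd k) = y ⟨(k:ℕ), hkm⟩ := rfl
    rw [hcast, div_eq_div_iff (by positivity) (by positivity)]
    nlinarith [hpow]
  have hsplit : phiMap m y = (hival m d hd y : ℝ)/2^d + ∑ k ∈ Finset.Ico d m, g k := by
    rw [h1, h2, ← Nat.Ico_zero_eq_range, ← Nat.Ico_zero_eq_range]
    exact (Finset.sum_Ico_consecutive g (Nat.zero_le d) hd).symm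
  have htail0 : 0 ≤ ∑ k ∈ Finset.Ico d m, g k := by
    refine Finset.sum_nonneg fun k _ => ?_
    rw [hg]; dsimp only; split
    · positivity
    · exact le_refl 0
  have htail1 : ∑ k ∈ Finset.Ico d m, g k ≤ (2^d)⁻¹ - (2^m)⁻¹ := by
    rw [← geom_tail d m hd]
    refine Finset.sum_le_sum fun k _ => ?_
    rw [hg]; dsimp only; split
    · rename_i h
      rw [div_eq_mul_inv]
      have : ((y ⟨k, h⟩).val : ℝ) ≤ 1 := by exact_mod_cast zmod2_val_le_one _
      nlinarith [inv_pos.mpr (show (0:ℝ) < 2^(k+1) by positivity)]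
    · positivity
  constructor
  · rw [hsplit]; linarith
  · rw [hsplit, add_div]
    have : (0:ℝ) < (2^m)⁻¹ := by positivity
    have h2d : (0:ℝ) < 2^d := by positivity
    have : ∑ k ∈ Finset.Ico d m, g k < (1:ℝ)/2^d := by
      rw [one_div]; linarith
    linarith

lemma mem_interval_iff {m d : ℕ} (hd : d ≤ m) (y : Fin m → ZMod 2) (a : ℕ) :
    ((a:ℝ)/2^d ≤ phiMap m y ∧ phiMap m y < ((a:ℝ)+1)/2^d) ↔ hival m d hd y = a := by
  obtain ⟨h1, h2⟩ := hival_bounds hd y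
  have h2d : (0:ℝ) < 2^d := by positivity
  constructor
  · rintro ⟨ha1, ha2⟩
    have l1 : (a:ℝ) < (hival m d hd y : ℝ) + 1 := by
      have := lt_of_le_of_lt ha1 h2
      rw [div_lt_div_iff₀ h2d h2d] at this
      nlinarith
    have l2 : (hival m d hd y : ℝ) < (a:ℝ) + 1 := by
      have := lt_of_le_of_lt h1 ha2
      rw [div_lt_div_iff₀ h2d h2d] at this
      nlinarith
    have n1 : a < hival m d hd y + 1 := by exact_mod_cast l1
    have n2 : hival m d hd y < a + 1 := by exact_mod_cast l2
    omega
  · rintro rfl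
    exact ⟨h1, h2⟩

end Work

def Msub {m : ℕ} (B : Matrix (Fin m) (Fin m) (ZMod 2)) (k : ℕ) (hk : k ≤ m) :
    Matrix (Fin k) (Fin k) (ZMod 2) :=
  Matrix.of fun i j => B (Fin.castLE hk i) ⟨m - k + j.val, by omega⟩

lemma mulVec_restrict {m d₁ d₂ : ℕ} (B : Matrix (Fin m) (Fin m) (ZMod 2))
    (h : d₁ + d₂ = m) (hd₂ : d₂ ≤ m) (w : Fin m → ZMod 2)
    (hw : ∀ j : Fin m, (j : ℕ) < d₁ → w j = 0) (i : Fin d₂) :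
    B.mulVec w (Fin.castLE hd₂ i)
      = (Msub B d₂ hd₂).mulVec (fun t => w ⟨d₁ + t.val, by omega⟩) i := by
  rw [Matrix.mulVec, Matrix.mulVec, dotProduct, dotProduct]
  have hinj : Function.Injective (fun t : Fin d₂ => (⟨d₁ + t.val, by omega⟩ : Fin m)) := by
    intro a b hab
    have : d₁ + a.val = d₁ + b.val := congrArg Fin.val hab
    exact Fin.ext (by omega)
  set e : Fin d₂ ↪ Fin m := ⟨fun t => ⟨d₁ + t.val, by omega⟩, hinj⟩ with he
  have hsub : ∑ j : Fin m, B (Fin.castLE hd₂ i) j * w j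
      = ∑ j ∈ Finset.univ.map e, B (Fin.castLE hd₂ i) j * w j := by
    refine (Finset.sum_subset (Finset.subset_univ _) fun j _ hj => ?_).symm
    have hjlt : (j : ℕ) < d₁ := by
      by_contra hge
      exact hj (Finset.mem_map.mpr ⟨⟨j.val - d₁, by omega⟩, Finset.mem_univ _,
        Fin.ext (by simp [he]; omega)⟩)
    rw [hw j hjlt, mul_zero]
  rw [hsub, Finset.sum_map]
  refine Finset.sum_congr rfl fun t _ => ?_
  have hcol : (⟨m - d₂ + t.val, by omega⟩ : Fin m) = e t := Fin.ext (by simp [he]; omega)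
  show B (Fin.castLE hd₂ i) (e t) * w (e t)
      = Msub B d₂ hd₂ i t * w ⟨d₁ + t.val, by omega⟩
  rw [Msub]
  show _ = B (Fin.castLE hd₂ i) ⟨m - d₂ + t.val, by omega⟩ * w ⟨d₁ + t.val, by omega⟩
  rw [hcol]
  rfl

lemma card_filter_eq_one_iff {α : Type*} [Fintype α] [DecidableEq α]
    (p : α → Prop) [DecidablePred p] :
    (Finset.univ.filter p).card = 1 ↔ ∃! x, p x := by
  rw [Finset.card_eq_one]
  constructor
  · rintro ⟨x, hx⟩
    have hmem : ∀ y, p y ↔ y = x := by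
      intro y
      constructor
      · intro hy
        have : y ∈ Finset.univ.filter p := Finset.mem_filter.mpr ⟨Finset.mem_univ _, hy⟩
        rw [hx, Finset.mem_singleton] at this; exact this
      · intro hy
        rw [hy]
        have : x ∈ Finset.univ.filter p := hx ▸ Finset.mem_singleton_self x
        exact (Finset.mem_filter.mp this).2
    exact ⟨x, (hmem x).mpr rfl, fun y hy => (hmem y).mp hy⟩
  · rintro ⟨x, hx, hu⟩
    refine ⟨x, Finset.ext fun y => ?_⟩
    simp only [Finset.mem_filter, Finset.mem_univ, true_and, Finset.mem_singleton]
    exact ⟨fun hy => hu y hy, fun hy => hy ▸ hx⟩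

lemma bij_iff_det {m d₁ d₂ : ℕ} (B : Matrix (Fin m) (Fin m) (ZMod 2)) (h : d₁ + d₂ = m) :
    Function.Bijective (fun v : Fin m → ZMod 2 =>
      ((fun k : Fin d₁ => v (Fin.castLE (show d₁ ≤ m by omega) k.rev)),
       (fun k : Fin d₂ => B.mulVec v (Fin.castLE (show d₂ ≤ m by omega) k.rev)))) ↔
    (Msub B d₂ (show d₂ ≤ m by omega)).det ≠ 0 := by
  have hd₁ : d₁ ≤ m := by omega
  have hd₂ : d₂ ≤ m := by omega
  set T : (Fin m → ZMod 2) → (Fin d₁ → ZMod 2) × (Fin d₂ → ZMod 2) :=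
    fun v => ((fun k => v (Fin.castLE hd₁ k.rev)),
      (fun k => B.mulVec v (Fin.castLE hd₂ k.rev))) with hT
  show Function.Bijective T ↔ _
  have hT0 : T 0 = 0 := Prod.ext_iff.mpr
    ⟨funext fun k => rfl, funext fun k => by rw [hT]; simp [Matrix.mulVec_zero]⟩
  have hraw : ∀ w : Fin m → ZMod 2, T w = 0 →
      (∀ j : Fin m, (j:ℕ) < d₁ → w j = 0) ∧
        (∀ i : Fin d₂, B.mulVec w (Fin.castLE hd₂ i) = 0) := by
    intro w hw
    have h1 := congrArg Prod.fst hw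
    have h2 := congrArg Prod.snd hw
    constructor
    · intro j hj
      have := congrFun h1 (Fin.rev ⟨j.val, hj⟩)
      simp only [hT, Fin.rev_rev] at this
      simpa using this
    · intro i
      have := congrFun h2 (Fin.rev i)
      simp only [hT, Fin.rev_rev] at this
      simpa using this
  have hker : (Msub B d₂ hd₂).det ≠ 0 → ∀ w, T w = 0 → w = 0 := by
    intro hdet w hw
    obtain ⟨hw1, hw2⟩ := hraw w hw
    set u : Fin d₂ → ZMod 2 := fun t => w ⟨d₁ + t.val, by omega⟩ with hu
    have hmv : (Msub B d₂ hd₂).mulVec u = 0 := by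
      funext i
      show (Msub B d₂ hd₂).mulVec u i = 0
      rw [← mulVec_restrict B h hd₂ w hw1 i]
      exact hw2 i
    have hu0 : u = 0 := by
      by_contra hne
      exact hdet (Matrix.exists_mulVec_eq_zero_iff.mp ⟨u, hne, hmv⟩)
    funext j
    rcases Nat.lt_or_ge (j:ℕ) d₁ with hj | hj
    · exact hw1 j hj
    · have hj2 : j = (⟨d₁ + ((j:ℕ) - d₁), by omega⟩ : Fin m) := Fin.ext (by simp; omega)
      rw [hj2]
      have := congrFun hu0 ⟨(j:ℕ) - d₁, by omega⟩
      simpa [hu] using this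
  constructor
  · intro hbij
    by_contra hdet
    obtain ⟨u, hu0, hmv⟩ := Matrix.exists_mulVec_eq_zero_iff.mpr hdet
    set w : Fin m → ZMod 2 :=
      fun j => if hj : (j:ℕ) < d₁ then 0 else u ⟨(j:ℕ) - d₁, by omega⟩ with hwdef
    have hw1 : ∀ j : Fin m, (j:ℕ) < d₁ → w j = 0 := fun j hj => dif_pos hj
    have hwu : (fun t : Fin d₂ => w ⟨d₁ + t.val, by omega⟩) = u := by
      funext t
      rw [hwdef]
      simp only
      rw [dif_neg (by omega)]
      congr 1
      exact Fin.ext (by simp)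
    have hTw : T w = 0 := by
      refine Prod.ext_iff.mpr ⟨funext fun k => ?_, funext fun k => ?_⟩
      · exact dif_pos (by simpa using (k.rev).isLt)
      · show B.mulVec w (Fin.castLE hd₂ k.rev) = 0
        rw [mulVec_restrict B h hd₂ w hw1 k.rev, hwu, hmv]
        rfl
    have hw0 : w = 0 := hbij.injective (by rw [hTw, hT0])
    apply hu0
    rw [← hwu, hw0]
    rfl
  · intro hdet
    refine (Fintype.bijective_iff_injective_and_card T).mpr ⟨?_, ?_⟩
    · intro u v huv
      have hTsub : T (u - v) = 0 := by
        have heq : T (u - v) = T u - T v := by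
          refine Prod.ext_iff.mpr ⟨?_, ?_⟩
          · funext k; rfl
          · funext k
            show B.mulVec (u - v) _ = _
            rw [Matrix.mulVec_sub]
            rfl
        rw [heq, huv, sub_self]
      exact sub_eq_zero.mp (hker hdet _ hTsub)
    · have c1 : Fintype.card (Fin m → ZMod 2) = 2 ^ m := by simp [ZMod.card]
      have c2 : Fintype.card ((Fin d₁ → ZMod 2) × (Fin d₂ → ZMod 2))
          = 2 ^ d₁ * 2 ^ d₂ := by simp [ZMod.card]
      rw [c1, c2, ← pow_add, h]

lemma countP_digitalNet {m : ℕ} (C : Fin 2 → Matrix (Fin m) (Fin m) (ZMod 2))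
    (p : (Fin 2 → ℝ) → Prop) [DecidablePred p] :
    (digitalNet m 2 C).countP p
      = (Finset.univ.filter (fun v : Fin m → ZMod 2 =>
          p (fun j => phiMap m ((C j).mulVec v)))).card := by
  rw [digitalNet, range_eq_map_lval m, Multiset.map_map, Multiset.countP_map]
  show _ = Multiset.card (Multiset.filter _ Finset.univ.val)
  refine congrArg Multiset.card ?_
  refine Multiset.filter_congr fun v _ => ?_
  rw [Function.comp_apply, digitsVec_lval]

lemma count_eq {m : ℕ} (B : Matrix (Fin m) (Fin m) (ZMod 2)) (d : Fin 2 → ℕ)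
    (h0 : d 0 ≤ m) (h1 : d 1 ≤ m) (a : Fin 2 → ℕ) :
    ((digitalNet m 2 ![1, B]).countP fun x => ∀ i,
        ((a i : ℝ) / 2 ^ d i ≤ x i ∧ x i < ((a i : ℝ) + 1) / 2 ^ d i))
    = (Finset.univ.filter (fun v : Fin m → ZMod 2 =>
        hival m (d 0) h0 v = a 0 ∧ hival m (d 1) h1 (B.mulVec v) = a 1)).card := by
  classical
  rw [countP_digitalNet]
  congr 1
  refine Finset.filter_congr fun v _ => ?_
  rw [Fin.forall_fin_two]
  simp only [Matrix.cons_val_zero, Matrix.cons_val_one, Matrix.head_cons, Matrix.one_mulVec]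
  rw [mem_interval_iff h0 v (a 0), mem_interval_iff h1 (B.mulVec v) (a 1)]

lemma isNet_iff_minors {m : ℕ} (B : Matrix (Fin m) (Fin m) (ZMod 2)) :
    IsNet 0 m 2 (digitalNet m 2 ![1, B]) ↔
      ∀ n (hn : n ≤ m), (Msub B n hn).det ≠ 0 := by
  classical
  constructor
  · intro hnet n hn
    have hsum : (m - n) + n = m := by omega
    rw [← bij_iff_det B hsum]
    rw [Function.bijective_iff_existsUnique]
    rintro ⟨b₁, b₂⟩
    have hcount := hnet ![m - n, n]
      (by simp [Fin.sum_univ_two]; omega) ![lval b₁, lval b₂]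
      (by rw [Fin.forall_fin_two]
          exact ⟨by simpa using lval_lt b₁, by simpa using lval_lt b₂⟩)
    rw [count_eq B ![m - n, n] (by simpa using Nat.sub_le m n) (by simpa using hn) ![lval b₁, lval b₂]] at hcount
    simp only [Matrix.cons_val_zero, Matrix.cons_val_one, Matrix.head_cons, pow_zero] at hcount
    have hcount := (card_filter_eq_one_iff _).mp hcount
    refine (existsUnique_congr fun v => ?_).mpr hcount
    constructor
    · intro hv
      have f1 := congrArg Prod.fst hv
      have f2 := congrArg Prod.snd hv
      exact ⟨congrArg lval f1, congrArg lval f2⟩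
    · rintro ⟨e1, e2⟩
      have f1 : (fun k : Fin (m - n) => v (Fin.castLE (show m - n ≤ m by omega) k.rev)) = b₁ :=
        lval_injective e1
      have f2 : (fun k : Fin n => B.mulVec v (Fin.castLE hn k.rev)) = b₂ :=
        lval_injective e2
      exact Prod.ext_iff.mpr ⟨f1, f2⟩
  · intro hdet d hsum a ha
    have hd : d 0 + d 1 = m := by
      rw [Fin.sum_univ_two] at hsum; omega
    have h0 : d 0 ≤ m := by omega
    have h1 : d 1 ≤ m := by omega
    rw [count_eq B d h0 h1 a, pow_zero, card_filter_eq_one_iff]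
    have hbij := (bij_iff_det B hd).mpr (hdet (d 1) h1)
    rw [Function.bijective_iff_existsUnique] at hbij
    obtain ⟨b₁, hb₁⟩ := lval_surjective (a 0) (ha 0)
    obtain ⟨b₂, hb₂⟩ := lval_surjective (a 1) (ha 1)
    have hcount := hbij (b₁, b₂)
    refine (existsUnique_congr fun v => ?_).mp hcount
    constructor
    · intro hv
      have f1 := congrArg Prod.fst hv
      have f2 := congrArg Prod.snd hv
      exact ⟨hb₁ ▸ congrArg lval f1, hb₂ ▸ congrArg lval f2⟩
    · rintro ⟨e1, e2⟩
      rw [← hb₁] at e1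
      rw [← hb₂] at e2
      exact Prod.ext_iff.mpr ⟨lval_injective e1, lval_injective e2⟩

lemma zmod2_add_self (x : ZMod 2) : x + x = 0 := by revert x; decide

lemma zmod2_eq_one_of_ne_zero {x : ZMod 2} (h : x ≠ 0) : x = 1 := by revert h; revert x; decide

lemma det_submatrix_perm {n : ℕ} (M : Matrix (Fin n) (Fin n) (ZMod 2)) (σ : Equiv.Perm (Fin n)) :
    (M.submatrix id σ).det = M.det := by
  rw [Matrix.det_permute' σ M]
  rcases Int.units_eq_one_or (Equiv.Perm.sign σ) with h | h <;> rw [h] <;> simp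

lemma Jmat_mul_apply {m : ℕ} (M : Matrix (Fin m) (Fin m) (ZMod 2)) (i j : Fin m) :
    (Jmat m * M) i j = M i.rev j := by
  rw [Matrix.mul_apply]
  rw [Finset.sum_eq_single i.rev]
  · have h1 : (i.rev : ℕ) = m - 1 - (i : ℕ) := by rw [Fin.val_rev]; omega
    have h2 := i.isLt
    have : Jmat m i i.rev = 1 := by
      show (if (i : ℕ) + (i.rev : ℕ) = m - 1 then (1 : ZMod 2) else 0) = 1
      rw [if_pos (by omega)]
    rw [this, one_mul]
  · intro t _ ht
    have h1 : (i.rev : ℕ) = m - 1 - (i : ℕ) := by rw [Fin.val_rev]; omega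
    have h2 := i.isLt
    have h3 := t.isLt
    have : Jmat m i t = 0 := by
      show (if (i : ℕ) + (t : ℕ) = m - 1 then (1 : ZMod 2) else 0) = 0
      rw [if_neg (fun hc => ht (Fin.ext (by omega)))]
    rw [this, zero_mul]
  · intro h; exact absurd (Finset.mem_univ _) h

lemma mul_Jmat_apply {m : ℕ} (M : Matrix (Fin m) (Fin m) (ZMod 2)) (i j : Fin m) :
    (M * Jmat m) i j = M i j.rev := by
  rw [Matrix.mul_apply]
  rw [Finset.sum_eq_single j.rev]
  · have h1 : (j.rev : ℕ) = m - 1 - (j : ℕ) := by rw [Fin.val_rev]; omega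
    have h2 := j.isLt
    have : Jmat m j.rev j = 1 := by
      show (if (j.rev : ℕ) + (j : ℕ) = m - 1 then (1 : ZMod 2) else 0) = 1
      rw [if_pos (by omega)]
    rw [this, mul_one]
  · intro t _ ht
    have h2 := j.isLt
    have h3 := t.isLt
    have : Jmat m t j = 0 := by
      show (if (t : ℕ) + (j : ℕ) = m - 1 then (1 : ZMod 2) else 0) = 0
      refine if_neg (fun hc => ht (Fin.ext ?_))
      rw [Fin.val_rev]; omega
    rw [this, mul_zero]
  · intro h; exact absurd (Finset.mem_univ _) h

lemma Jmat_mul_Jmat (m : ℕ) : Jmat m * Jmat m = 1 := by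
  ext i j
  rw [Jmat_mul_apply]
  have h1 : (i.rev : ℕ) = m - 1 - (i : ℕ) := by rw [Fin.val_rev]; omega
  have h2 := i.isLt
  have h3 := j.isLt
  show (if (i.rev : ℕ) + (j : ℕ) = m - 1 then (1 : ZMod 2) else 0) = (1 : Matrix (Fin m) (Fin m) (ZMod 2)) i j
  rw [Matrix.one_apply]
  by_cases hij : i = j
  · subst hij; rw [if_pos (by omega), if_pos rfl]
  · rw [if_neg (fun hc => hij (Fin.ext (by omega))), if_neg hij]

lemma isUnit_Jmat (m : ℕ) : IsUnit (Jmat m) :=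
  ⟨⟨Jmat m, Jmat m, Jmat_mul_Jmat m, Jmat_mul_Jmat m⟩, rfl⟩

lemma conj_apply {m : ℕ} (M : Matrix (Fin m) (Fin m) (ZMod 2)) (i j : Fin m) :
    (Jmat m * M * Jmat m) i j = M i.rev j.rev := by
  rw [mul_Jmat_apply, Jmat_mul_apply]

def IsUpperTri {m : ℕ} (U : Matrix (Fin m) (Fin m) (ZMod 2)) : Prop :=
  ∀ i j : Fin m, j < i → U i j = 0

lemma isLowerTri_conj {m : ℕ} {U : Matrix (Fin m) (Fin m) (ZMod 2)} (h : IsUpperTri U) :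
    IsLowerTri (Jmat m * U * Jmat m) := by
  intro i j hij
  rw [conj_apply]
  exact h _ _ (by rwa [Fin.rev_lt_rev])

lemma isUpperTri_conj {m : ℕ} {L : Matrix (Fin m) (Fin m) (ZMod 2)} (h : IsLowerTri L) :
    IsUpperTri (Jmat m * L * Jmat m) := by
  intro i j hij
  rw [conj_apply]
  exact h _ _ (by rwa [Fin.rev_lt_rev])

lemma isLowerTri_mul {m : ℕ} {P Q : Matrix (Fin m) (Fin m) (ZMod 2)}
    (hP : IsLowerTri P) (hQ : IsLowerTri Q) : IsLowerTri (P * Q) := by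
  intro i j hij
  rw [Matrix.mul_apply]
  refine Finset.sum_eq_zero fun t _ => ?_
  rcases lt_or_ge i t with h | h
  · rw [hP i t h, zero_mul]
  · rw [hQ t j (lt_of_le_of_lt h hij), mul_zero]

lemma mul_diag {m : ℕ} {P Q : Matrix (Fin m) (Fin m) (ZMod 2)}
    (hP : IsLowerTri P) (hQ : IsLowerTri Q) (i : Fin m) : (P * Q) i i = P i i * Q i i := by
  rw [Matrix.mul_apply]
  rw [Finset.sum_eq_single i]
  · intro t _ ht
    rcases lt_or_ge i t with h | h
    · rw [hP i t h, zero_mul]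
    · rw [hQ t i (lt_of_le_of_ne h ht), mul_zero]
  · intro h; exact absurd (Finset.mem_univ _) h

lemma det_lowerTri {m : ℕ} {M : Matrix (Fin m) (Fin m) (ZMod 2)} (h : IsLowerTri M) :
    M.det = ∏ i, M i i :=
  Matrix.det_of_lowerTriangular M (fun i j hij => h i j (by simpa using hij))

lemma det_upperTri {m : ℕ} {M : Matrix (Fin m) (Fin m) (ZMod 2)} (h : IsUpperTri M) :
    M.det = ∏ i, M i i :=
  Matrix.det_of_upperTriangular (fun i j hij => h i j hij)

lemma diag_ne_zero_of_lower {m : ℕ} {L : Matrix (Fin m) (Fin m) (ZMod 2)}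
    (h : IsLowerTri L) (hu : IsUnit L) (i : Fin m) : L i i ≠ 0 := by
  have hdet : L.det ≠ 0 := (Matrix.isUnit_iff_isUnit_det L).mp hu |>.ne_zero
  rw [det_lowerTri h] at hdet
  exact Finset.prod_ne_zero_iff.mp hdet i (Finset.mem_univ i)

lemma diag_ne_zero_of_upper {m : ℕ} {U : Matrix (Fin m) (Fin m) (ZMod 2)}
    (h : IsUpperTri U) (hu : IsUnit U) (i : Fin m) : U i i ≠ 0 := by
  have hdet : U.det ≠ 0 := (Matrix.isUnit_iff_isUnit_det U).mp hu |>.ne_zero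
  rw [det_upperTri h] at hdet
  exact Finset.prod_ne_zero_iff.mp hdet i (Finset.mem_univ i)

lemma submatrix_lower {m k : ℕ} (hk : k ≤ m) {L : Matrix (Fin m) (Fin m) (ZMod 2)}
    (hL : IsLowerTri L) : IsLowerTri (L.submatrix (Fin.castLE hk) (Fin.castLE hk)) := by
  intro i j hij
  exact hL _ _ hij

lemma submatrix_upper {m k : ℕ} (hk : k ≤ m) {U : Matrix (Fin m) (Fin m) (ZMod 2)}
    (hU : IsUpperTri U) : IsUpperTri (U.submatrix (Fin.castLE hk) (Fin.castLE hk)) := by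
  intro i j hij
  exact hU _ _ hij

lemma submatrix_mul_tri {m k : ℕ} (hk : k ≤ m) (L M : Matrix (Fin m) (Fin m) (ZMod 2))
    (hL : IsLowerTri L) :
    (L * M).submatrix (Fin.castLE hk) (Fin.castLE hk)
      = L.submatrix (Fin.castLE hk) (Fin.castLE hk)
          * M.submatrix (Fin.castLE hk) (Fin.castLE hk) := by
  ext i j
  rw [Matrix.submatrix_apply, Matrix.mul_apply, Matrix.mul_apply]
  have hstep : ∑ t : Fin m, L (Fin.castLE hk i) t * M t (Fin.castLE hk j)
      = ∑ t ∈ Finset.univ.map (Fin.castLEEmb hk),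
          L (Fin.castLE hk i) t * M t (Fin.castLE hk j) := by
    refine (Finset.sum_subset (Finset.subset_univ _) fun t _ ht => ?_).symm
    have htk : ¬ (t : ℕ) < k := by
      intro hlt
      exact ht (Finset.mem_map.mpr ⟨⟨(t : ℕ), hlt⟩, Finset.mem_univ _, Fin.ext rfl⟩)
    have : Fin.castLE hk i < t := by
      rw [Fin.lt_def]
      have := i.isLt
      simp only [Fin.coe_castLE]
      omega
    rw [hL _ _ this, zero_mul]
  rw [hstep, Finset.sum_map]
  refine Finset.sum_congr rfl fun t _ => rfl

lemma Msub_apply {m : ℕ} (B : Matrix (Fin m) (Fin m) (ZMod 2)) (k : ℕ) (hk : k ≤ m)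
    (i j : Fin k) : Msub B k hk i j = B (Fin.castLE hk i) ⟨m - k + j.val, by omega⟩ := rfl

lemma det_Asub_eq_det_Msub {m : ℕ} (B : Matrix (Fin m) (Fin m) (ZMod 2)) (k : ℕ) (hk : k ≤ m) :
    ((B * Jmat m).submatrix (Fin.castLE hk) (Fin.castLE hk)).det = (Msub B k hk).det := by
  have hrw : (B * Jmat m).submatrix (Fin.castLE hk) (Fin.castLE hk)
      = (Msub B k hk).submatrix id ⇑(Fin.revPerm : Equiv.Perm (Fin k)) := by
    ext i j
    rw [Matrix.submatrix_apply, mul_Jmat_apply, Matrix.submatrix_apply, id_eq, Msub_apply]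
    have hj := j.isLt
    congr 1
    refine Fin.ext ?_
    simp only [Fin.val_rev, Fin.coe_castLE, Fin.revPerm_apply]
    omega
  rw [hrw, det_submatrix_perm]

lemma gauss {m : ℕ} (A : Matrix (Fin m) (Fin m) (ZMod 2))
    (hA : ∀ k (hk : k ≤ m), ((A.submatrix (Fin.castLE hk) (Fin.castLE hk)).det ≠ 0)) :
    ∀ k, k ≤ m → ∃ L : Matrix (Fin m) (Fin m) (ZMod 2), IsLowerTri L ∧ (∀ i, L i i = 1) ∧
      ∀ i j : Fin m, (j : ℕ) < k → j < i → (L * A) i j = 0 := by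
  intro k
  induction k with
  | zero =>
    intro _
    refine ⟨1, fun i j hij => Matrix.one_apply_ne (ne_of_lt hij), fun i => Matrix.one_apply_eq i,
      fun i j hj _ => absurd hj (by omega)⟩
  | succ k ih =>
    intro hk1
    obtain ⟨L, hL, hLd, hzero⟩ := ih (by omega)
    set M := L * A with hM
    set kk : Fin m := ⟨k, by omega⟩ with hkk
    have hsubU : IsUpperTri (M.submatrix (Fin.castLE hk1) (Fin.castLE hk1)) := by
      intro i j hij
      rw [Matrix.submatrix_apply]
      have hj : (j : ℕ) < k := by
        have hi := i.isLt
        have := (Fin.lt_def).mp hij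
        omega
      exact hzero _ _ (by simpa using hj) (by exact hij)
    have hdetM : (M.submatrix (Fin.castLE hk1) (Fin.castLE hk1)).det ≠ 0 := by
      rw [hM, submatrix_mul_tri hk1 L A hL, Matrix.det_mul]
      have hLsub : (L.submatrix (Fin.castLE hk1) (Fin.castLE hk1)).det = 1 := by
        rw [det_lowerTri (submatrix_lower hk1 hL)]
        refine Finset.prod_eq_one fun i _ => ?_
        exact hLd _
      rw [hLsub, one_mul]
      exact hA (k+1) hk1
    have hpivot : M kk kk ≠ 0 := by
      rw [det_upperTri hsubU] at hdetM
      have := Finset.prod_ne_zero_iff.mp hdetM ⟨k, Nat.lt_succ_self k⟩ (Finset.mem_univ _)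
      exact this
    have hpiv1 : M kk kk = 1 := zmod2_eq_one_of_ne_zero hpivot
    set C : Matrix (Fin m) (Fin m) (ZMod 2) :=
      Matrix.of (fun i j => if j = kk ∧ kk < i then M i kk else 0) with hC
    have hCapp : ∀ i j, C i j = if j = kk ∧ kk < i then M i kk else 0 := fun i j => rfl
    have hCM : ∀ i j, (C * M) i j = if kk < i then M i kk * M kk j else 0 := by
      intro i j
      rw [Matrix.mul_apply]
      rw [Finset.sum_eq_single kk]
      · rw [hCapp]
        by_cases h : kk < i
        · rw [if_pos ⟨rfl, h⟩, if_pos h]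
        · rw [if_neg (fun hc => h hc.2), if_neg h, zero_mul]
      · intro t _ ht
        rw [hCapp, if_neg (fun hc => ht hc.1), zero_mul]
      · intro h; exact absurd (Finset.mem_univ _) h
    set E : Matrix (Fin m) (Fin m) (ZMod 2) := 1 + C with hE
    have hE_lower : IsLowerTri E := by
      intro i j hij
      rw [hE, Matrix.add_apply, Matrix.one_apply_ne (ne_of_lt hij), hCapp,
        if_neg (by rintro ⟨rfl, hlt⟩; exact absurd hij (not_lt.mpr hlt.le)), add_zero]
    have hE_diag : ∀ i, E i i = 1 := by
      intro i
      rw [hE, Matrix.add_apply, Matrix.one_apply_eq, hCapp,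
        if_neg (by rintro ⟨rfl, hlt⟩; exact lt_irrefl _ hlt), add_zero]
    refine ⟨E * L, isLowerTri_mul hE_lower hL,
      fun i => by rw [mul_diag hE_lower hL, hE_diag, hLd, one_mul], ?_⟩
    intro i j hjk1 hji
    have hEM : (E * L) * A = M + C * M := by
      rw [mul_assoc, ← hM, hE, add_mul, one_mul]
    rw [hEM, Matrix.add_apply, hCM]
    rcases Nat.lt_or_ge (j : ℕ) k with hjk | hjk
    · rw [hzero i j hjk hji]
      by_cases h : kk < i
      · rw [if_pos h, hzero kk j hjk (by rw [Fin.lt_def]; exact hjk), mul_zero, add_zero]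
      · rw [if_neg h, add_zero]
    · have hj : j = kk := Fin.ext (by have hvk : (kk:ℕ) = k := rfl; omega)
      rw [hj] at hji ⊢
      rw [if_pos hji, hpiv1, mul_one]
      exact zmod2_add_self _

lemma minors_iff_factor {m : ℕ} (B : Matrix (Fin m) (Fin m) (ZMod 2)) :
    (∀ n (hn : n ≤ m), (Msub B n hn).det ≠ 0) ↔
      ∃ L₁ L₂ : Matrix (Fin m) (Fin m) (ZMod 2),
        IsLowerTri L₁ ∧ IsUnit L₁ ∧ IsLowerTri L₂ ∧ IsUnit L₂ ∧
          B = L₁ * Jmat m * L₂ := by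
  constructor
  · intro h
    set A := B * Jmat m with hA
    have hA' : ∀ k (hk : k ≤ m), ((A.submatrix (Fin.castLE hk) (Fin.castLE hk)).det ≠ 0) :=
      fun k hk => by rw [hA, det_Asub_eq_det_Msub]; exact h k hk
    obtain ⟨L, hL, hLd, hzero⟩ := gauss A hA' m le_rfl
    set U := L * A with hU
    have hUu : IsUpperTri U := fun i j hij => hzero i j j.isLt hij
    have hLdet : L.det = 1 := by rw [det_lowerTri hL]; exact Finset.prod_eq_one fun i _ => hLd i
    have hLdu : IsUnit L.det := by rw [hLdet]; exact isUnit_one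
    haveI := Matrix.invertibleOfIsUnitDet L hLdu
    have hAdet : A.det ≠ 0 := by
      have h2 := hA' m le_rfl
      have h3 : A.submatrix (Fin.castLE (le_refl m)) (Fin.castLE (le_refl m)) = A := by
        ext i j; rfl
      rwa [h3] at h2
    have hUdet : U.det ≠ 0 := by rw [hU, Matrix.det_mul, hLdet, one_mul]; exact hAdet
    have hUunit : IsUnit U := (Matrix.isUnit_iff_isUnit_det U).mpr (isUnit_iff_ne_zero.mpr hUdet)
    have hAeq : A = L⁻¹ * U := by
      rw [hU, ← mul_assoc, Matrix.nonsing_inv_mul L hLdu, one_mul]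
    have hBA : B = A * Jmat m := by
      rw [hA, mul_assoc, Jmat_mul_Jmat, mul_one]
    refine ⟨L⁻¹, Jmat m * U * Jmat m, ?_, ?_, isLowerTri_conj hUu, ?_, ?_⟩
    · have hbt : L.BlockTriangular OrderDual.toDual := fun i j hij => hL i j (by simpa using hij)
      have hinv := Matrix.blockTriangular_inv_of_blockTriangular hbt
      exact fun i j hij => hinv (by simpa using hij)
    · exact ⟨⟨L⁻¹, L, Matrix.nonsing_inv_mul L hLdu, Matrix.mul_nonsing_inv L hLdu⟩, rfl⟩
    · exact ((isUnit_Jmat m).mul hUunit).mul (isUnit_Jmat m)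
    · rw [hBA, hAeq]
      have hJJ : Jmat m * (Jmat m * U * Jmat m) = U * Jmat m := by
        rw [← mul_assoc, ← mul_assoc, Jmat_mul_Jmat, one_mul]
      rw [mul_assoc L⁻¹ (Jmat m) (Jmat m * U * Jmat m), hJJ, ← mul_assoc,
        Matrix.nonsing_inv_mul L hLdu, one_mul, hU, mul_assoc L A (Jmat m),
        ← mul_assoc L⁻¹ L (A * Jmat m), Matrix.nonsing_inv_mul L hLdu, one_mul]
  · rintro ⟨L₁, L₂, h1, hu1, h2, hu2, rfl⟩
    intro n hn
    rw [← det_Asub_eq_det_Msub]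
    have hAeq : (L₁ * Jmat m * L₂) * Jmat m = L₁ * (Jmat m * L₂ * Jmat m) := by
      rw [mul_assoc, mul_assoc, mul_assoc]
    set U := Jmat m * L₂ * Jmat m with hUdef
    have hUu : IsUpperTri U := isUpperTri_conj h2
    have hUunit : IsUnit U := ((isUnit_Jmat m).mul hu2).mul (isUnit_Jmat m)
    rw [hAeq, submatrix_mul_tri hn _ _ h1, Matrix.det_mul]
    refine mul_ne_zero ?_ ?_
    · rw [det_lowerTri (submatrix_lower hn h1)]
      refine Finset.prod_ne_zero_iff.mpr fun i _ => ?_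
      exact diag_ne_zero_of_lower h1 hu1 _
    · rw [det_upperTri (submatrix_upper hn hUu)]
      refine Finset.prod_ne_zero_iff.mpr fun i _ => ?_
      exact diag_ne_zero_of_upper hUu hUunit _


theorem stmt10 (m : ℕ) (hm : 1 ≤ m) (B : Matrix (Fin m) (Fin m) (ZMod 2)) :
    IsNet 0 m 2 (digitalNet m 2 ![1, B]) ↔
      ∃ L₁ L₂ : Matrix (Fin m) (Fin m) (ZMod 2),
        IsLowerTri L₁ ∧ IsUnit L₁ ∧ IsLowerTri L₂ ∧ IsUnit L₂ ∧
          B = L₁ * Jmat m * L₂ := by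
  exact (isNet_iff_minors B).trans (minors_iff_factor B)
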